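/- Fix pairwise distinct complex numbers a_1, …, a_n. For every subset I ⊆ {1,…,n} with |I| ≥ 2, the set H(I) = {s ∈ ℂⁿ : the lines ℓ(a_i, s_i), i ∈ I, have a common point in ℙ²(ℂ)} is a ℂ-linear subspace of ℂⁿ of dimension n − |I| + 2. -/

import Mathlib

noncomputable section

/-- The complex projective plane `ℙ²(ℂ)`. -/
abbrev P2 : Type := Projectivization ℂ (Fin 3 → ℂ)

/-- The line `{[x0:x1:x2] ∈ ℙ²(ℂ) : b0·x0 + b1·x1 + b2·x2 = 0}` determined by the
linear form with coefficients `b`. -/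
def lineSet (b : Fin 3 → ℂ) : Set P2 :=
  {p : P2 | b 0 * p.rep 0 + b 1 * p.rep 1 + b 2 * p.rep 2 = 0}

/-- The line `ℓ(a,s) = {[x0:x1:x2] ∈ ℙ²(ℂ) : x1 − a·x2 + s·x0 = 0}`. -/
def lineL (a s : ℂ) : Set P2 := lineSet ![s, 1, -a]

/-- `H(I) = {s ∈ ℂⁿ : the lines ℓ(a_i, s_i), i ∈ I, are concurrent}`. -/
def Hset {n : ℕ} (a : Fin n → ℂ) (I : Finset (Fin n)) : Set (Fin n → ℂ) :=
  {s | ∃ p : P2, ∀ i ∈ I, p ∈ lineL (a i) (s i)}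

set_option synthInstance.maxHeartbeats 1000000 in
/-- for pairwise distinct `a_1, …, a_n ∈ ℂ` and `I ⊆ {1,…,n}` with
`|I| ≥ 2`, the set `H(I)` is a `ℂ`-linear subspace of `ℂⁿ` of dimension
`n − |I| + 2`. -/
theorem stmt6 (n : ℕ) (a : Fin n → ℂ) (ha : Function.Injective a)
    (I : Finset (Fin n)) (hI : 2 ≤ I.card) :
    ∃ W : Submodule ℂ (Fin n → ℂ),
      (W : Set (Fin n → ℂ)) = Hset a I ∧ Module.finrank ℂ W = n - I.card + 2 := by
  classical
  obtain ⟨i₀, hi₀, j₀, hj₀, hij⟩ := Finset.one_lt_card.mp hI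
  set u : (↥I → ℂ) := fun _ => 1 with hu
  set v : (↥I → ℂ) := fun i => a i with hv
  set r : (Fin n → ℂ) →ₗ[ℂ] (↥I → ℂ) := LinearMap.funLeft ℂ ℂ ((↑) : ↥I → Fin n) with hr
  have hrsurj : Function.Surjective r :=
    LinearMap.funLeft_surjective_of_injective ℂ ℂ _ Subtype.val_injective
  set p : Submodule ℂ (↥I → ℂ) := Submodule.span ℂ {u, v} with hp
  refine ⟨Submodule.comap r p, ?_, ?_⟩
  · ext s
    simp only [SetLike.mem_coe, Submodule.mem_comap, hp, Submodule.mem_span_pair]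
    constructor
    · rintro ⟨c, d, hcd⟩
      have hx : (![1, -c, d] : Fin 3 → ℂ) ≠ 0 := by
        intro h
        have := congrFun h 0
        simp at this
      refine ⟨Projectivization.mk ℂ _ hx, ?_⟩
      obtain ⟨t, ht⟩ := Projectivization.exists_smul_eq_mk_rep ℂ _ hx
      intro i hi
      have hci : c * 1 + d * a i = s i := congrFun hcd ⟨i, hi⟩
      simp only [lineL, lineSet, Set.mem_setOf_eq, ← ht]
      simp only [Pi.smul_apply, Matrix.cons_val_zero, Matrix.cons_val_one, Matrix.head_cons,
        Matrix.cons_val_two, Matrix.tail_cons, Units.smul_def, smul_eq_mul]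
      linear_combination -(t : ℂ) * hci

    · rintro ⟨q, hq⟩
      have hq' : ∀ i ∈ I, s i * q.rep 0 + q.rep 1 - a i * q.rep 2 = 0 := by
        intro i hi
        have := hq i hi
        simp only [lineL, lineSet, Set.mem_setOf_eq, Matrix.cons_val_zero, Matrix.cons_val_one,
          Matrix.head_cons, Matrix.cons_val_two, Matrix.tail_cons] at this
        linear_combination this
      have h0 : q.rep 0 ≠ 0 := by
        intro h0
        have hi' := hq' i₀ hi₀
        have hj' := hq' j₀ hj₀
        rw [h0] at hi' hj'
        have h2 : q.rep 2 = 0 := by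
          have : (a i₀ - a j₀) * q.rep 2 = 0 := by ring_nf; linear_combination hj' - hi'
          rcases mul_eq_zero.mp this with h | h
          · exact absurd (ha (by linear_combination h)) hij
          · exact h
        have h1 : q.rep 1 = 0 := by rw [h2] at hi'; linear_combination hi'
        exact q.rep_nonzero (by
          funext k
          fin_cases k <;> simp [h0, h1, h2])
      refine ⟨-(q.rep 1) / q.rep 0, q.rep 2 / q.rep 0, ?_⟩
      funext i
      have hthis := hq' i i.2
      show -(q.rep 1) / q.rep 0 * u i + q.rep 2 / q.rep 0 * v i = s i
      simp only [hu, hv]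
      rw [div_mul_eq_mul_div, div_mul_eq_mul_div, ← add_div, div_eq_iff h0]
      linear_combination -hthis
  · have hfin : FiniteDimensional ℂ (Fin n → ℂ) := inferInstance
    -- linear independence of u, v
    have hlin : LinearIndependent ℂ ![v, u] := by
      rw [linearIndependent_fin2]
      constructor
      · intro h
        have := congrFun h ⟨i₀, hi₀⟩
        simp [hu] at this
      · intro c h
        have h1 := congrFun h ⟨i₀, hi₀⟩
        have h2 := congrFun h ⟨j₀, hj₀⟩
        simp only [Matrix.cons_val_one, Matrix.head_cons, Matrix.cons_val_zero, Pi.smul_apply,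
          hu, hv, smul_eq_mul] at h1 h2
        exact hij (ha (by linear_combination h2 - h1))
    have hrange : Set.range ![v, u] = {u, v} := by
      ext x
      simp [Fin.exists_fin_two]
    have hpfin : Module.finrank ℂ p = 2 := by
      rw [hp, ← hrange, finrank_span_eq_card hlin]
      simp
    -- kernel of r
    have hker : Module.finrank ℂ (LinearMap.ker r) = n - I.card := by
      have := LinearMap.finrank_range_add_finrank_ker r
      rw [LinearMap.range_eq_top.mpr hrsurj, finrank_top, Module.finrank_fin_fun,
        Module.finrank_pi] at this
      simp only [Fintype.card_coe] at this
      omega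
    have hle : LinearMap.ker r ≤ Submodule.comap r p := by
      intro s hs
      simp only [Submodule.mem_comap, LinearMap.mem_ker.mp hs]
      exact p.zero_mem
    set W := Submodule.comap r p with hW
    set φ : W →ₗ[ℂ] p := (r.domRestrict W).codRestrict p (fun x => x.2) with hφ
    have hφsurj : Function.Surjective φ := by
      rintro ⟨y, hy⟩
      obtain ⟨s, hs⟩ := hrsurj y
      refine ⟨⟨s, by simp [hW, Submodule.mem_comap, hs, hy]⟩, ?_⟩
      ext
      exact congrFun hs _
    have hkerφ : Module.finrank ℂ (LinearMap.ker φ) = n - I.card := by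
      have hkφ : LinearMap.ker φ = Submodule.comap W.subtype (LinearMap.ker r) := by
        ext x
        rw [LinearMap.mem_ker, Submodule.mem_comap, LinearMap.mem_ker, Subtype.ext_iff]
        rfl
      rw [hkφ, (Submodule.comapSubtypeEquivOfLe hle).finrank_eq, hker]
    have := LinearMap.finrank_range_add_finrank_ker φ
    rw [LinearMap.range_eq_top.mpr hφsurj, finrank_top, hpfin, hkerφ] at this
    omega
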